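/- arXiv:1506.00886 — 6 statements merged into one kernel-verified Lean document; each statement's English description precedes it below -/
import Mathlib

section
/- Let ε > 0 and let G be a finite group with |G| ≥ 2 and symmetric generating set S. If λ₁(G,S) ≤ min{2^{-9}, (|S|/|G|)^ε} or h(G,S) ≤ min{2^{-2}, (|S|/|G|)^ε}, then diam_S(G) ≥ (|G|/|S|)^{ε/3}. -/
open Pointwise

/-- The least `n` such that `S^n` is the whole group: the diameter of the Cayley graph. -/
noncomputable def sdiam {G : Type*} [Group G] (S : Set G) : ℕ :=
  sInf {n : ℕ | S ^ n = (Set.univ : Set G)}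

/-- The first nonzero eigenvalue of the Laplacian of the Cayley graph of `G` with respect
to `S`, given variationally as the infimum of the Rayleigh quotient over nonzero mean-zero
functions. -/
noncomputable def lambdaOne (G : Type*) [Group G] [Fintype G] (S : Finset G) : ℝ :=
  sInf { r : ℝ | ∃ f : G → ℝ, f ≠ 0 ∧ (∑ x, f x) = 0 ∧
    r = (∑ x, ∑ s ∈ S, (f (x * s) - f x) ^ 2) / (2 * ∑ x, (f x) ^ 2) }

/-- The Cheeger constant of the Cayley graph of a finite group with respect to a
generating set `S`: the infimum over nonempty `A` with `2|A| ≤ |G|` of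
`|{(a,s) ∈ A × S : a·s ∉ A}|/|A|`. -/
noncomputable def cheeger {G : Type*} [Group G] (S : Set G) : ℝ :=
  sInf { r : ℝ | ∃ A : Set G, A.Nonempty ∧ 2 * Nat.card A ≤ Nat.card G ∧
    r = (Nat.card {p : G × G | p.1 ∈ A ∧ p.2 ∈ S ∧ p.1 * p.2 ∉ A} : ℝ) / (Nat.card A : ℝ) }

section Aux
open Pointwise
variable {G : Type*} [Group G]

lemma inv_mem_spow {S : Set G} (hsym : ∀ s ∈ S, s⁻¹ ∈ S) :
    ∀ n (x : G), x ∈ S ^ n → x⁻¹ ∈ S ^ n := by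
  intro n
  induction n with
  | zero => intro x hx; rw [pow_zero] at *; simpa using hx
  | succ n ih =>
    intro x hx
    rw [pow_succ] at hx
    obtain ⟨a, ha, s, hs, rfl⟩ := Set.mem_mul.mp hx
    rw [pow_succ', mul_inv_rev]
    exact Set.mul_mem_mul (hsym s hs) (ih a ha)

lemma exists_spow_univ [Finite G] {S : Set G} (h1 : (1:G) ∈ S)
    (hsym : ∀ s ∈ S, s⁻¹ ∈ S) (hgen : Subgroup.closure S = ⊤) :
    ∃ n, S ^ n = (Set.univ : Set G) := by
  have key : ∀ x : G, ∃ n, x ∈ S ^ n := by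
    intro x
    have hx : x ∈ Subgroup.closure S := by rw [hgen]; trivial
    induction hx using Subgroup.closure_induction with
    | mem s hs => exact ⟨1, by simpa using hs⟩
    | one => exact ⟨0, by simp⟩
    | mul a b _ _ iha ihb =>
      obtain ⟨m, hm⟩ := iha
      obtain ⟨k, hk⟩ := ihb
      exact ⟨m + k, by rw [pow_add]; exact Set.mul_mem_mul hm hk⟩
    | inv a _ ih =>
      obtain ⟨m, hm⟩ := ih
      exact ⟨m, inv_mem_spow hsym m a hm⟩
  cases nonempty_fintype G
  choose u hu using key
  refine ⟨Finset.univ.sup u, ?_⟩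
  apply Set.eq_univ_of_forall
  intro x
  exact Set.pow_subset_pow_right h1 (Finset.le_sup (Finset.mem_univ x)) (hu x)

variable [Fintype G]

lemma spow_Q_bound (S : Finset G) (f : G → ℝ)
    {n : ℕ} {g : G} (hg : g ∈ (S : Set G) ^ n) :
    Real.sqrt (∑ x, (f (x * g) - f x) ^ 2) ≤
      n * Real.sqrt (∑ x, ∑ s ∈ S, (f (x * s) - f x) ^ 2) := by
  set E : ℝ := ∑ x, ∑ s ∈ S, (f (x * s) - f x) ^ 2 with hE
  have hEnn : 0 ≤ E := Finset.sum_nonneg fun _ _ => Finset.sum_nonneg fun _ _ => sq_nonneg _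
  have hgen : ∀ s ∈ S, Real.sqrt (∑ x, (f (x * s) - f x) ^ 2) ≤ Real.sqrt E := by
    intro s hs
    apply Real.sqrt_le_sqrt
    rw [hE, Finset.sum_comm]
    exact Finset.single_le_sum (f := fun s => ∑ x, (f (x * s) - f x) ^ 2)
      (fun s _ => Finset.sum_nonneg fun _ _ => sq_nonneg _) hs
  induction n generalizing g with
  | zero =>
    rw [pow_zero] at hg
    simp only [Set.mem_one] at hg
    subst hg
    simp
  | succ n ih =>
    rw [pow_succ] at hg
    obtain ⟨a, ha, s, hs, rfl⟩ := Set.mem_mul.mp hg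
    set u : G → ℝ := fun x => f (x * a * s) - f (x * a) with hu
    set v : G → ℝ := fun x => f (x * a) - f x with hv
    have hsplit : ∀ x, f (x * (a * s)) - f x = u x + v x := by
      intro x; simp [hu, hv, mul_assoc]
    have hU : (∑ x, u x ^ 2) = ∑ x, (f (x * s) - f x) ^ 2 := by
      apply Fintype.sum_equiv (Equiv.mulRight a)
      intro x; simp [hu, Equiv.mulRight]
    have hUnn : 0 ≤ ∑ x, u x ^ 2 := Finset.sum_nonneg fun _ _ => sq_nonneg _
    have hVnn : 0 ≤ ∑ x, v x ^ 2 := Finset.sum_nonneg fun _ _ => sq_nonneg _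
    have cs : ∑ x, u x * v x ≤
        Real.sqrt (∑ x, u x ^ 2) * Real.sqrt (∑ x, v x ^ 2) :=
      Real.sum_mul_le_sqrt_mul_sqrt _ _ _
    have e1 : (∑ x, (u x + v x) ^ 2) =
        (∑ x, u x ^ 2) + 2 * (∑ x, u x * v x) + (∑ x, v x ^ 2) := by
      rw [Finset.mul_sum, ← Finset.sum_add_distrib, ← Finset.sum_add_distrib]
      apply Finset.sum_congr rfl
      intro x _; ring
    have expand : (∑ x, (f (x * (a * s)) - f x) ^ 2) ≤
        (Real.sqrt (∑ x, v x ^ 2) + Real.sqrt (∑ x, u x ^ 2)) ^ 2 := by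
      simp_rw [hsplit]
      rw [e1, add_sq, Real.sq_sqrt hVnn, Real.sq_sqrt hUnn]
      nlinarith [cs]
    have key : Real.sqrt (∑ x, (f (x * (a * s)) - f x) ^ 2) ≤
        Real.sqrt (∑ x, v x ^ 2) + Real.sqrt (∑ x, u x ^ 2) := by
      have := Real.sqrt_le_sqrt expand
      rwa [Real.sqrt_sq (by positivity)] at this
    have h1 : Real.sqrt (∑ x, v x ^ 2) ≤ n * Real.sqrt E := ih ha
    have h2 : Real.sqrt (∑ x, u x ^ 2) ≤ Real.sqrt E := by
      rw [hU]; exact hgen s hs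
    calc Real.sqrt (∑ x, (f (x * (a * s)) - f x) ^ 2)
        ≤ Real.sqrt (∑ x, v x ^ 2) + Real.sqrt (∑ x, u x ^ 2) := key
      _ ≤ n * Real.sqrt E + Real.sqrt E := add_le_add h1 h2
      _ = (n + 1 : ℕ) * Real.sqrt E := by push_cast; ring

lemma sum_Q_eq (f : G → ℝ) (hmean : ∑ x, f x = 0) :
    ∑ g : G, ∑ x : G, (f (x * g) - f x) ^ 2
      = 2 * Fintype.card G * ∑ x, f x ^ 2 := by
  rw [Finset.sum_comm]
  have reindex : ∀ x : G, ∑ g : G, (f (x * g) - f x) ^ 2 = ∑ y : G, (f y - f x) ^ 2 := by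
    intro x
    apply Fintype.sum_equiv (Equiv.mulLeft x)
    intro g; simp [Equiv.mulLeft]
  have inner : ∀ x : G, ∑ y : G, (f y - f x) ^ 2
      = (∑ y, f y ^ 2) + (Fintype.card G : ℝ) * f x ^ 2 := by
    intro x
    have e : ∑ y : G, (f y - f x) ^ 2
        = ∑ y : G, f y ^ 2 - ∑ y : G, (2 * f x * f y) + ∑ y : G, f x ^ 2 := by
      rw [← Finset.sum_sub_distrib, ← Finset.sum_add_distrib]
      exact Finset.sum_congr rfl fun y _ => by ring
    rw [e, ← Finset.mul_sum, hmean, Finset.sum_const, Finset.card_univ]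
    simp [nsmul_eq_mul]
  simp_rw [reindex, inner]
  rw [Finset.sum_add_distrib, ← Finset.mul_sum, Finset.sum_const, Finset.card_univ]
  simp [nsmul_eq_mul]
  ring

lemma rayleigh_lb (S : Finset G) {n : ℕ} (hn : (S : Set G) ^ n = Set.univ)
    (f : G → ℝ) (hmean : ∑ x, f x = 0) :
    2 * ∑ x, f x ^ 2 ≤ (n : ℝ) ^ 2 * ∑ x, ∑ s ∈ S, (f (x * s) - f x) ^ 2 := by
  set E : ℝ := ∑ x, ∑ s ∈ S, (f (x * s) - f x) ^ 2 with hE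
  have hEnn : 0 ≤ E := Finset.sum_nonneg fun _ _ => Finset.sum_nonneg fun _ _ => sq_nonneg _
  have hQ : ∀ g : G, (∑ x, (f (x * g) - f x) ^ 2) ≤ (n : ℝ) ^ 2 * E := by
    intro g
    have hgm : g ∈ (S : Set G) ^ n := hn ▸ Set.mem_univ g
    have h := spow_Q_bound S f hgm
    have hQnn : (0 : ℝ) ≤ ∑ x, (f (x * g) - f x) ^ 2 :=
      Finset.sum_nonneg fun _ _ => sq_nonneg _
    calc (∑ x, (f (x * g) - f x) ^ 2)
        = Real.sqrt (∑ x, (f (x * g) - f x) ^ 2) ^ 2 := (Real.sq_sqrt hQnn).symm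
      _ ≤ ((n : ℝ) * Real.sqrt E) ^ 2 := pow_le_pow_left₀ (Real.sqrt_nonneg _) h 2
      _ = (n : ℝ) ^ 2 * E := by rw [mul_pow, Real.sq_sqrt hEnn]
  have hle : ∑ g : G, ∑ x, (f (x * g) - f x) ^ 2 ≤ ∑ _g : G, (n : ℝ) ^ 2 * E :=
    Finset.sum_le_sum fun g _ => hQ g
  rw [sum_Q_eq f hmean, Finset.sum_const, Finset.card_univ, nsmul_eq_mul] at hle
  have hcpos : (0 : ℝ) < Fintype.card G := by
    exact_mod_cast Fintype.card_pos
  have h2 : (Fintype.card G : ℝ) * (2 * ∑ x, f x ^ 2) ≤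
      (Fintype.card G : ℝ) * ((n : ℝ) ^ 2 * E) := by linarith
  exact le_of_mul_le_mul_left h2 hcpos

open Finset in
lemma cheeger_pair_bound (S : Finset G) {n : ℕ} (hn : (S : Set G) ^ n = Set.univ)
    (A : Set G) (hA : A.Nonempty) (hcard : 2 * Nat.card A ≤ Nat.card G) :
    Nat.card A ≤ 2 * n *
      Nat.card {p : G × G | p.1 ∈ A ∧ p.2 ∈ (S : Set G) ∧ p.1 * p.2 ∉ A} := by
  classical
  set A' : Finset G := Finset.univ.filter (· ∈ A) with hA'
  set B : ℕ := (Finset.univ.filter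
      (fun p : G × G => p.1 ∈ A ∧ p.2 ∈ (S : Set G) ∧ p.1 * p.2 ∉ A)).card with hB
  set d : G → ℕ := fun g => (A'.filter (fun a => a * g ∉ A)).card with hd
  set c : G → ℕ := fun g => (A'.filter (fun a => a * g ∈ A)).card with hc
  have d_sub : ∀ g h : G, d (g * h) ≤ d g + d h := by
    intro g h
    have hsub : A'.filter (fun a => a * (g * h) ∉ A) ⊆
        (A'.filter (fun a => a * g ∉ A)) ∪
          ((A'.filter (fun a => a * h ∉ A)).image (fun b => b * g⁻¹)) := by
      intro a ha
      simp only [Finset.mem_filter, Finset.mem_union, Finset.mem_image, hA',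
        Finset.mem_univ, true_and] at ha ⊢
      by_cases hag : a * g ∈ A
      · exact Or.inr ⟨a * g, ⟨hag, by rw [mul_assoc]; exact ha.2⟩, by group⟩
      · exact Or.inl ⟨ha.1, hag⟩
    calc d (g * h) ≤ _ := Finset.card_le_card hsub
      _ ≤ d g + ((A'.filter (fun a => a * h ∉ A)).image (fun b => b * g⁻¹)).card :=
          Finset.card_union_le _ _
      _ ≤ d g + d h := by gcongr; exact Finset.card_image_le
  have d_one : d 1 = 0 := by
    simp only [hd, mul_one]
    rw [Finset.card_eq_zero, Finset.filter_eq_empty_iff]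
    intro a ha
    simp only [hA', Finset.mem_filter] at ha
    simp [ha.2]
  have dS_le_B : ∀ s ∈ S, d s ≤ B := by
    intro s hs
    apply Finset.card_le_card_of_injOn (fun a => (a, s))
    · intro a ha
      simp only [Finset.mem_filter, hA', Finset.mem_univ, true_and] at ha ⊢
      exact Finset.mem_filter.mpr ⟨Finset.mem_univ _, (Finset.mem_filter.mp (Finset.mem_filter.mp ha).1).2,
        by simpa using hs, (Finset.mem_filter.mp ha).2⟩
    · intro a _ b _ hab
      exact congrArg Prod.fst hab
  have d_pow : ∀ m : ℕ, ∀ g ∈ (S : Set G) ^ m, d g ≤ m * B := by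
    intro m
    induction m with
    | zero =>
      intro g hg
      rw [pow_zero] at hg
      simp only [Set.mem_one] at hg
      subst hg
      simp [d_one]
    | succ m ih =>
      intro g hg
      rw [pow_succ] at hg
      obtain ⟨a, ha, s, hs, rfl⟩ := Set.mem_mul.mp hg
      calc d (a * s) ≤ d a + d s := d_sub a s
        _ ≤ m * B + B := add_le_add (ih a ha) (dS_le_B s (by simpa using hs))
        _ = (m + 1) * B := by ring
  have hcd : ∀ g, c g + d g = A'.card := fun g =>
    Finset.card_filter_add_card_filter_not _
  have hc_sum : ∑ g : G, c g = A'.card * A'.card := by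
    have hcg : ∀ g, c g = ∑ a ∈ A', if a * g ∈ A then 1 else 0 := fun g =>
      Finset.card_filter _ _
    simp_rw [hcg]
    rw [Finset.sum_comm]
    have inner : ∀ a ∈ A', (∑ g : G, if a * g ∈ A then 1 else 0) = A'.card := by
      intro a _
      rw [← Finset.card_filter]
      apply Finset.card_bij (fun g _ => a * g)
      · intro g hg
        simp only [Finset.mem_filter, Finset.mem_univ, true_and, hA'] at hg ⊢
        exact hg
      · intro g₁ _ g₂ _ e
        exact mul_left_cancel e
      · intro b hb
        simp only [Finset.mem_filter, Finset.mem_univ, true_and, hA'] at hb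
        exact ⟨a⁻¹ * b, by simp [hb], by simp⟩
    rw [Finset.sum_congr rfl inner, Finset.sum_const, smul_eq_mul]
  have hNA : Nat.card A = A'.card := by
    rw [Nat.card_coe_set_eq, Set.ncard_eq_toFinset_card']
    congr 1
    ext a
    simp [hA', Set.mem_toFinset]
  have hA1 : 1 ≤ A'.card := by
    obtain ⟨a, ha⟩ := hA
    exact Finset.card_pos.mpr ⟨a, by simp [hA', ha]⟩
  have hGpos : 0 < Fintype.card G := Fintype.card_pos
  have hAle : 2 * A'.card ≤ Fintype.card G := by
    rw [← hNA, ← Nat.card_eq_fintype_card]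
    exact hcard
  have havg : ∃ g : G, A'.card ≤ 2 * d g := by
    by_contra hcon
    push_neg at hcon
    have hsum_le : ∑ g : G, (2 * d g + 1) ≤ Fintype.card G * A'.card := by
      calc ∑ g : G, (2 * d g + 1) ≤ ∑ _g : G, A'.card :=
            Finset.sum_le_sum fun g _ => hcon g
        _ = Fintype.card G * A'.card := by
            rw [Finset.sum_const, smul_eq_mul, Finset.card_univ]
    have hsplit : ∑ g : G, (2 * d g + 1) = 2 * (∑ g : G, d g) + Fintype.card G := by
      rw [Finset.sum_add_distrib, Finset.sum_const, smul_eq_mul, Finset.card_univ,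
        ← Finset.mul_sum, mul_one]
    have hE1 : (∑ g : G, c g) + (∑ g : G, d g) = Fintype.card G * A'.card := by
      rw [← Finset.sum_add_distrib]
      simp_rw [hcd]
      rw [Finset.sum_const, smul_eq_mul, Finset.card_univ]
    have h2Q : 2 * (A'.card * A'.card) ≤ Fintype.card G * A'.card := by
      calc 2 * (A'.card * A'.card) = (2 * A'.card) * A'.card := by ring
        _ ≤ Fintype.card G * A'.card := Nat.mul_le_mul_right _ hAle
    rw [hc_sum] at hE1
    rw [hsplit] at hsum_le
    omega
  obtain ⟨g, hg⟩ := havg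
  have hgS : g ∈ (S : Set G) ^ n := hn ▸ Set.mem_univ g
  have hfin : A'.card ≤ 2 * (n * B) :=
    le_trans hg (Nat.mul_le_mul_left _ (d_pow n g hgS))
  have hNB : Nat.card {p : G × G | p.1 ∈ A ∧ p.2 ∈ (S : Set G) ∧ p.1 * p.2 ∉ A} = B := by
    rw [Nat.card_coe_set_eq, Set.ncard_eq_toFinset_card']
    congr 1
    ext p
    simp [hB, Set.mem_toFinset]
  rw [hNA, hNB, mul_assoc]
  exact hfin

end Aux

/-- **Groups with very small Cheeger constant or spectral gap are almost flat.**
If `λ₁(G,S) ≤ min{2⁻⁹, (|S|/|G|)^ε}` or `h(G,S) ≤ min{2⁻², (|S|/|G|)^ε}` then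
`diam_S(G) ≥ (|G|/|S|)^{ε/3}`. -/
theorem stmt5 (ε : ℝ) (hε : 0 < ε) (G : Type*) [Group G] [Fintype G] (S : Finset G)
    (hG : 2 ≤ Nat.card G)
    (h1 : (1 : G) ∈ S) (hsym : ∀ s ∈ S, s⁻¹ ∈ S)
    (hgen : Subgroup.closure (S : Set G) = ⊤)
    (h : lambdaOne G S ≤ min ((2 : ℝ) ^ (-9 : ℤ)) (((S.card : ℝ) / (Nat.card G : ℝ)) ^ ε) ∨
         cheeger (S : Set G) ≤
           min ((2 : ℝ) ^ (-2 : ℤ)) (((S.card : ℝ) / (Nat.card G : ℝ)) ^ ε)) :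
    ((Nat.card G : ℝ) / (S.card : ℝ)) ^ (ε / 3) ≤ (sdiam (S : Set G) : ℝ) := by
  classical
  have hNG : Nat.card G = Fintype.card G := Nat.card_eq_fintype_card
  -- diameter facts
  have hSetne : {m : ℕ | (S : Set G) ^ m = Set.univ}.Nonempty :=
    exists_spow_univ (S := (S : Set G)) h1 (fun s hs => hsym s hs) hgen
  set n : ℕ := sdiam (S : Set G) with hndef
  have hn : (S : Set G) ^ n = Set.univ := Nat.sInf_mem hSetne
  have hn0 : n ≠ 0 := by
    intro h0
    rw [h0, pow_zero] at hn
    obtain ⟨x, y, hxy⟩ := Fintype.exists_pair_of_one_lt_card (by omega : 1 < Fintype.card G)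
    have hx : x = 1 := by
      have hx' : x ∈ (1 : Set G) := by rw [hn]; trivial
      simpa using hx'
    have hy : y = 1 := by
      have hy' : y ∈ (1 : Set G) := by rw [hn]; trivial
      simpa using hy'
    exact hxy (hx.trans hy.symm)
  have hn1 : (1 : ℝ) ≤ (n : ℝ) := by
    exact_mod_cast Nat.one_le_iff_ne_zero.mpr hn0
  have hnpos : (0 : ℝ) < (n : ℝ) := lt_of_lt_of_le one_pos hn1
  -- cardinality facts
  have hSne : S.Nonempty := ⟨1, h1⟩
  have hSpos : (0 : ℝ) < (S.card : ℝ) := by exact_mod_cast Finset.card_pos.mpr hSne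
  have hGpos : (0 : ℝ) < (Nat.card G : ℝ) := by exact_mod_cast lt_of_lt_of_le two_pos hG
  have hSle : (S.card : ℝ) ≤ (Nat.card G : ℝ) := by
    rw [hNG]; exact_mod_cast Finset.card_le_univ S
  set D : ℝ := (Nat.card G : ℝ) / (S.card : ℝ) with hDdef
  have hDpos : 0 < D := div_pos hGpos hSpos
  have hD1 : 1 ≤ D := (one_le_div hSpos).mpr hSle
  have hqD : ((S.card : ℝ) / (Nat.card G : ℝ)) ^ ε = (D ^ ε)⁻¹ := by
    rw [show (S.card : ℝ) / (Nat.card G : ℝ) = D⁻¹ by rw [hDdef, inv_div],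
      Real.inv_rpow hDpos.le]
  have hDε : 0 < D ^ ε := Real.rpow_pos_of_pos hDpos ε
  have hDe3 : D ^ (ε / 3) = (D ^ ε) ^ ((3 : ℝ)⁻¹) := by
    rw [← Real.rpow_mul hDpos.le, div_eq_mul_inv]
  rcases h with hlam | hch
  · -- spectral case
    have hlb : 1 / (n : ℝ) ^ 2 ≤ lambdaOne G S := by
      apply le_csInf
      · -- nonempty
        obtain ⟨a, b, hab⟩ := Fintype.exists_pair_of_one_lt_card (by omega : 1 < Fintype.card G)
        refine ⟨_, ⟨fun x => (if x = a then (1 : ℝ) else 0) - (if x = b then 1 else 0),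
          ?_, ?_, rfl⟩⟩
        · intro h0
          have := congrFun h0 a
          simp [hab] at this
        · rw [Finset.sum_sub_distrib]
          simp
      · rintro r ⟨f, hf0, hmean, rfl⟩
        have hT : (0 : ℝ) < ∑ x, f x ^ 2 := by
          obtain ⟨x, hx⟩ := Function.ne_iff.mp hf0
          exact Finset.sum_pos' (fun _ _ => sq_nonneg _)
            ⟨x, Finset.mem_univ x, pow_two_pos_of_ne_zero hx⟩
        have hmain := rayleigh_lb S hn f hmean
        rw [div_le_div_iff₀ (pow_pos hnpos 2) (by linarith)]
        nlinarith [hmain]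
    have hmin := le_trans hlb hlam
    have h2 : 1 / (n : ℝ) ^ 2 ≤ (D ^ ε)⁻¹ := by
      rw [← hqD]; exact le_trans hmin (min_le_right _ _)
    have hDn : D ^ ε ≤ (n : ℝ) ^ 2 := by
      rw [← one_div] at h2
      exact le_of_one_div_le_one_div (pow_pos hnpos 2) h2
    calc D ^ (ε / 3) = (D ^ ε) ^ ((3 : ℝ)⁻¹) := hDe3
      _ ≤ ((n : ℝ) ^ 2) ^ ((3 : ℝ)⁻¹) := by
          apply Real.rpow_le_rpow hDε.le hDn (by norm_num)
      _ = (n : ℝ) ^ ((2 : ℝ) * (3 : ℝ)⁻¹) := by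
          rw [← Real.rpow_natCast (n : ℝ) 2, ← Real.rpow_mul hnpos.le]
          norm_num
      _ ≤ (n : ℝ) ^ (1 : ℝ) := by
          apply Real.rpow_le_rpow_of_exponent_le hn1
          norm_num
      _ = (n : ℝ) := Real.rpow_one _
  · -- cheeger case
    have hlb : 1 / (2 * (n : ℝ)) ≤ cheeger (S : Set G) := by
      apply le_csInf
      · refine ⟨_, ⟨({1} : Set G), Set.singleton_nonempty _, ?_, rfl⟩⟩
        rw [Nat.card_coe_set_eq, Set.ncard_singleton]
        omega
      · rintro r ⟨A, hAne, hAcard, rfl⟩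
        have key := cheeger_pair_bound S hn A hAne hAcard
        have : Nonempty A := hAne.to_subtype
        have hApos : (0 : ℝ) < (Nat.card A : ℝ) := by
          exact_mod_cast Nat.card_pos
        rw [div_le_div_iff₀ (by linarith : (0:ℝ) < 2 * (n:ℝ)) hApos]
        have keyR : (Nat.card A : ℝ) ≤ 2 * (n : ℝ) *
            (Nat.card {p : G × G | p.1 ∈ A ∧ p.2 ∈ (S : Set G) ∧ p.1 * p.2 ∉ A} : ℝ) := by
          exact_mod_cast key
        linarith
    have hmin := le_trans hlb hch
    have hn2 : (2 : ℝ) ≤ (n : ℝ) := by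
      have h4 : 1 / (2 * (n : ℝ)) ≤ 1 / 4 := by
        have := le_trans hmin (min_le_left _ _)
        norm_num at this ⊢
        linarith
      rw [div_le_div_iff₀ (by positivity) (by norm_num)] at h4
      linarith
    have h2 : 1 / (2 * (n : ℝ)) ≤ (D ^ ε)⁻¹ := by
      rw [← hqD]; exact le_trans hmin (min_le_right _ _)
    have hDn : D ^ ε ≤ 2 * (n : ℝ) := by
      rw [← one_div] at h2
      exact le_of_one_div_le_one_div (by linarith) h2
    have hcube : 2 * (n : ℝ) ≤ (n : ℝ) ^ 3 := by
      have h4 : (4 : ℝ) ≤ (n : ℝ) ^ 2 := by nlinarith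
      nlinarith [h4, hnpos]
    calc D ^ (ε / 3) = (D ^ ε) ^ ((3 : ℝ)⁻¹) := hDe3
      _ ≤ (2 * (n : ℝ)) ^ ((3 : ℝ)⁻¹) := Real.rpow_le_rpow hDε.le hDn (by norm_num)
      _ ≤ ((n : ℝ) ^ 3) ^ ((3 : ℝ)⁻¹) := Real.rpow_le_rpow (by positivity) hcube (by norm_num)
      _ = (n : ℝ) ^ ((3 : ℝ) * (3 : ℝ)⁻¹) := by
          rw [← Real.rpow_natCast (n : ℝ) 3, ← Real.rpow_mul hnpos.le]
          norm_num
      _ = (n : ℝ) := by norm_num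
end

section
/- Let G be a group, let S ⊆ G be a finite symmetric subset, let K ≥ 1 be a real number, and suppose that |S^{5n}| ≤ K·|S^n| for some integer n ≥ 1. Then S^{2n} is a K-approximate subgroup of G; that is, there exists a subset X ⊆ G with |X| ≤ K such that S^{4n} ⊆ X·S^{2n}. -/
open Pointwise

/-- **Small doubling gives an approximate group.**
If `S` is a finite symmetric subset of a group `G` with `|S^{5n}| ≤ K|S^n|` for some
`n ≥ 1`, then `S^{2n}` is a `K`-approximate subgroup of `G`: there is `X ⊆ G` with
`|X| ≤ K` and `S^{4n} ⊆ X·S^{2n}`. -/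
theorem stmt9 {G : Type*} [Group G] [DecidableEq G] (S : Finset G) (K : ℝ) (hK : 1 ≤ K)
    (h1 : (1 : G) ∈ S) (hsym : ∀ s ∈ S, s⁻¹ ∈ S)
    (n : ℕ) (hn : 1 ≤ n)
    (hdoub : ((S ^ (5 * n)).card : ℝ) ≤ K * ((S ^ n).card : ℝ)) :
    ∃ X : Finset G, (X.card : ℝ) ≤ K ∧ S ^ (4 * n) ⊆ X * S ^ (2 * n) := by
  have hBne : (S ^ n).Nonempty := ⟨1, Finset.one_mem_pow h1⟩
  have hmul : (S ^ (4 * n)) * (S ^ n) = S ^ (5 * n) := by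
    rw [← pow_add]; ring_nf
  obtain ⟨F, hFA, hFcard, hcov⟩ := Finset.ruzsa_covering_mul hBne (by rw [hmul]; exact hdoub)
  refine ⟨F, hFcard, hcov.trans ?_⟩
  apply Finset.mul_subset_mul_left
  have hinv : (S ^ n)⁻¹ = S ^ n := by
    have : S⁻¹ = S := by
      ext x
      simp only [Finset.mem_inv']
      exact ⟨fun h => by simpa using hsym _ h, fun h => hsym _ h⟩
    rw [← inv_pow, this]
  rw [div_eq_mul_inv, hinv, ← pow_add, two_mul]
end

section
/- Let G be a group generated by a finite symmetric set S containing the identity, let Γ be a subgroup of G, and let k ∈ ℕ. Suppose there is a subset T ⊆ G with |T| ≤ k such that S^k ⊆ T·Γ (i.e. S^k is contained in at most k left-cosets of Γ). Then G = S^k·Γ; in particular the index [G:Γ] is at most k. -/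
open Pointwise

/-- **A ball contained in few cosets gives a finite-index subgroup.**
If `G` is generated by a finite symmetric set `S` containing the identity, `Γ ≤ G`, and
`S^k` is contained in at most `k` left cosets of `Γ` (i.e. `S^k ⊆ T·Γ` with `|T| ≤ k`),
then `G = S^k·Γ`; in particular `[G:Γ] ≤ k`. -/
theorem stmt11 {G : Type*} [Group G] [DecidableEq G] (S : Finset G)
    (h1 : (1 : G) ∈ S) (hsym : ∀ s ∈ S, s⁻¹ ∈ S)
    (hgen : Subgroup.closure (S : Set G) = ⊤)
    (Γ : Subgroup G) (k : ℕ) (T : Finset G) (hT : T.card ≤ k)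
    (hcover : ((S ^ k : Finset G) : Set G) ⊆ (T : Set G) * (Γ : Set G)) :
    ((S ^ k : Finset G) : Set G) * (Γ : Set G) = Set.univ ∧
      Γ.index ≠ 0 ∧ Γ.index ≤ k := by
  classical
  set mk : G → G ⧸ Γ := QuotientGroup.mk with hmkdef
  have hmono : ∀ n : ℕ, (S ^ n : Finset G) ⊆ S ^ (n + 1) := by
    intro n x hx
    rw [pow_succ]
    simpa using Finset.mul_mem_mul hx h1
  have hm : Monotone (fun n => (S ^ n : Finset G)) := monotone_nat_of_le_succ hmono
  have h1pow : ∀ n : ℕ, (1 : G) ∈ (S ^ n : Finset G) := by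
    intro n
    have : (1 : G) ∈ (S ^ 0 : Finset G) := by simp
    exact hm (Nat.zero_le n) this
  set f : ℕ → ℕ := fun n => ((S ^ n : Finset G).image mk).card with hfdef
  have hf0 : f 0 = 1 := by simp [hfdef]
  have hfmono : Monotone f :=
    fun a b hab => Finset.card_le_card (Finset.image_subset_image (hm hab))
  have hfk : f k ≤ k := by
    have hsub : (S ^ k : Finset G).image mk ⊆ T.image mk := by
      intro q hq
      obtain ⟨x, hx, rfl⟩ := Finset.mem_image.mp hq
      obtain ⟨t, ht, γ, hγ, rfl⟩ := hcover (by exact_mod_cast hx)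
      refine Finset.mem_image.mpr ⟨t, ht, ?_⟩
      exact (QuotientGroup.mk_mul_of_mem t hγ).symm
    calc f k ≤ (T.image mk).card := Finset.card_le_card hsub
      _ ≤ T.card := Finset.card_image_le
      _ ≤ k := hT
  -- find a stabilization point
  have hstab : ∃ n, n < k ∧ f (n + 1) ≤ f n := by
    by_contra hcon
    push_neg at hcon
    have key : ∀ m, m ≤ k → m + 1 ≤ f m := by
      intro m
      induction m with
      | zero => intro _; simp [hf0]
      | succ m ih =>
        intro hmk
        have h1 := ih (Nat.le_of_succ_le hmk)
        have h2 := hcon m (Nat.lt_of_succ_le hmk)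
        omega
    have := key k le_rfl
    omega
  obtain ⟨n, hnk, hle⟩ := hstab
  have him : (S ^ n : Finset G).image mk = (S ^ (n + 1) : Finset G).image mk :=
    Finset.eq_of_subset_of_card_le (Finset.image_subset_image (hmono n)) hle
  set A : Set G := ((S ^ n : Finset G) : Set G) * (Γ : Set G) with hAdef
  have hmemA : ∀ x, x ∈ A ↔ ∃ y ∈ (S ^ n : Finset G), ∃ γ ∈ Γ, y * γ = x := by
    intro x
    constructor
    · rintro ⟨y, hy, γ, hγ, rfl⟩
      exact ⟨y, by exact_mod_cast hy, γ, hγ, rfl⟩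
    · rintro ⟨y, hy, γ, hγ, rfl⟩
      exact ⟨y, by exact_mod_cast hy, γ, hγ, rfl⟩
  have h1A : (1 : G) ∈ A := (hmemA 1).mpr ⟨1, h1pow n, 1, Γ.one_mem, by simp⟩
  have hstep : ∀ x ∈ (S ^ (n + 1) : Finset G), x ∈ A := by
    intro x hx
    have : mk x ∈ (S ^ n : Finset G).image mk := by
      rw [him]; exact Finset.mem_image_of_mem mk hx
    obtain ⟨y, hy, hyx⟩ := Finset.mem_image.mp this
    have hmem : y⁻¹ * x ∈ Γ := by
      rwa [hmkdef, QuotientGroup.eq] at hyx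
    exact (hmemA x).mpr ⟨y, hy, y⁻¹ * x, hmem, by group⟩
  have hSA : ∀ s ∈ S, ∀ a ∈ A, s * a ∈ A := by
    intro s hs a ha
    obtain ⟨y, hy, γ, hγ, rfl⟩ := (hmemA a).mp ha
    have hsy : s * y ∈ (S ^ (n + 1) : Finset G) := by
      rw [pow_succ']
      exact Finset.mul_mem_mul hs hy
    obtain ⟨z, hz, δ, hδ, hzd⟩ := (hmemA _).mp (hstep _ hsy)
    refine (hmemA _).mpr ⟨z, hz, δ * γ, Γ.mul_mem hδ hγ, ?_⟩
    rw [← mul_assoc, hzd, mul_assoc]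
  -- every g maps A into A
  have hall : ∀ g : G, (∀ a ∈ A, g * a ∈ A) ∧ (∀ a ∈ A, g⁻¹ * a ∈ A) := by
    intro g
    have hg : g ∈ Subgroup.closure (S : Set G) := by rw [hgen]; trivial
    refine Subgroup.closure_induction ?_ ?_ ?_ ?_ hg
    · intro s hs
      exact ⟨hSA s hs, hSA s⁻¹ (hsym s hs)⟩
    · constructor <;> intro a ha <;> simpa using ha
    · rintro x y _ _ ⟨hx1, hx2⟩ ⟨hy1, hy2⟩
      constructor
      · intro a ha
        rw [mul_assoc]
        exact hx1 _ (hy1 a ha)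
      · intro a ha
        rw [mul_inv_rev, mul_assoc]
        exact hy2 _ (hx2 a ha)
    · rintro x _ ⟨hx1, hx2⟩
      exact ⟨hx2, by simpa using hx1⟩
  have hAuniv : A = Set.univ := by
    ext g
    simp only [Set.mem_univ, iff_true]
    have := (hall g).1 1 h1A
    simpa using this
  have hmain : ((S ^ k : Finset G) : Set G) * (Γ : Set G) = Set.univ := by
    apply Set.eq_univ_of_univ_subset
    rw [← hAuniv]
    apply Set.mul_subset_mul_right
    exact_mod_cast hm (le_of_lt hnk)
  refine ⟨hmain, ?_, ?_⟩
  · -- index ≠ 0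
    have hsurj : Function.Surjective (fun t : T => (mk t : G ⧸ Γ)) := by
      intro q
      obtain ⟨g, rfl⟩ := QuotientGroup.mk_surjective q
      have hg : g ∈ ((S ^ k : Finset G) : Set G) * (Γ : Set G) := by
        rw [hmain]; trivial
      obtain ⟨x, hx, γ, hγ, rfl⟩ := hg
      obtain ⟨t, ht, δ, hδ, rfl⟩ := hcover hx
      refine ⟨⟨t, ht⟩, ?_⟩
      show mk t = mk (t * δ * γ)
      rw [hmkdef, mul_assoc]
      exact (QuotientGroup.mk_mul_of_mem t (Γ.mul_mem hδ hγ)).symm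
    have hfin : Finite (G ⧸ Γ) := Finite.of_surjective _ hsurj
    have hpos : 0 < Nat.card (G ⧸ Γ) := Nat.card_pos
    rw [Subgroup.index]
    omega
  · have hsurj : Function.Surjective (fun t : T => (mk t : G ⧸ Γ)) := by
      intro q
      obtain ⟨g, rfl⟩ := QuotientGroup.mk_surjective q
      have hg : g ∈ ((S ^ k : Finset G) : Set G) * (Γ : Set G) := by
        rw [hmain]; trivial
      obtain ⟨x, hx, γ, hγ, rfl⟩ := hg
      obtain ⟨t, ht, δ, hδ, rfl⟩ := hcover hx
      refine ⟨⟨t, ht⟩, ?_⟩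
      show mk t = mk (t * δ * γ)
      rw [hmkdef, mul_assoc]
      exact (QuotientGroup.mk_mul_of_mem t (Γ.mul_mem hδ hγ)).symm
    have hle' : Nat.card (G ⧸ Γ) ≤ Nat.card T := Nat.card_le_card_of_surjective _ hsurj
    have : Nat.card T = T.card := Nat.card_eq_finsetCard T
    rw [Subgroup.index]
    omega
end

section
/- Let π : G → G' be a group homomorphism with kernel N, let K ≥ 1 be a real number, and let A be a finite symmetric subset of G such that N ⊆ A and such that the image π(A) is a K-approximate subgroup of G'. Then A² is a K³-approximate subgroup of G; that is, there exists X ⊆ G with |X| ≤ K³ such that A⁴ ⊆ X·A². -/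
open Pointwise

/-- **Pulling back an approximate group along a quotient.**
Let `π : G → G'` be a homomorphism with kernel `N`, let `K ≥ 1`, and let `A` be a finite
symmetric subset of `G` with `N ⊆ A` such that `π(A)` is a `K`-approximate subgroup of
`G'`.  Then `A²` is a `K³`-approximate subgroup of `G`: there is `X ⊆ G` with `|X| ≤ K³`
and `A⁴ ⊆ X·A²`. -/
theorem stmt14 {G G' : Type*} [Group G] [Group G'] [DecidableEq G] [DecidableEq G']
    (π : G →* G') (N : Subgroup G) (hN : N = π.ker) (K : ℝ) (hK : 1 ≤ K)
    (A : Finset G) (h1 : (1 : G) ∈ A) (hsym : ∀ a ∈ A, a⁻¹ ∈ A)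
    (hNA : (N : Set G) ⊆ (A : Set G))
    (happ : ∃ Y : Finset G', (Y.card : ℝ) ≤ K ∧
      A.image π * A.image π ⊆ Y * A.image π) :
    ∃ X : Finset G, (X.card : ℝ) ≤ K ^ 3 ∧ A ^ 4 ⊆ X * A ^ 2 := by
  classical
  obtain ⟨Y, hYcard, hYB⟩ := happ
  set B : Finset G' := A.image π with hB
  -- B^4 ⊆ Y^3 * B
  have h2 : B * B ⊆ Y * B := hYB
  have h3 : B ^ 4 ⊆ Y ^ 3 * B := by
    have step : ∀ S : Finset G', S ⊆ Y ^ 2 * B → S * B ⊆ Y ^ 3 * B := by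
      intro S hS
      calc S * B ⊆ (Y ^ 2 * B) * B := Finset.mul_subset_mul_right hS
        _ = Y ^ 2 * (B * B) := by rw [mul_assoc]
        _ ⊆ Y ^ 2 * (Y * B) := Finset.mul_subset_mul_left h2
        _ = Y ^ 3 * B := by rw [← mul_assoc, ← pow_succ]
    have h32 : B ^ 3 ⊆ Y ^ 2 * B := by
      have step2 : B ^ 2 * B ⊆ (Y * B) * B := Finset.mul_subset_mul_right (by rw [sq]; exact h2)
      calc B ^ 3 = B ^ 2 * B := by rw [pow_succ]
        _ ⊆ (Y * B) * B := step2
        _ = Y * (B * B) := by rw [mul_assoc]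
        _ ⊆ Y * (Y * B) := Finset.mul_subset_mul_left h2
        _ = Y ^ 2 * B := by rw [← mul_assoc, sq]
    calc B ^ 4 = B ^ 3 * B := by rw [pow_succ]
      _ ⊆ Y ^ 3 * B := step (B ^ 3) h32
  -- section of π
  let s : G' → G := fun y => if h : ∃ g : G, π g = y then h.choose else 1
  have hs : ∀ y : G', (∃ g : G, π g = y) → π (s y) = y := by
    intro y h; simp only [s, dif_pos h]; exact h.choose_spec
  refine ⟨(Y ^ 3).image s, ?_, ?_⟩
  · have c1 : ((Y ^ 3).image s).card ≤ Y.card ^ 3 :=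
      Finset.card_image_le.trans Finset.card_pow_le
    calc ((((Y ^ 3).image s).card : ℕ) : ℝ) ≤ ((Y.card ^ 3 : ℕ) : ℝ) := by exact_mod_cast c1
      _ = (Y.card : ℝ) ^ 3 := by push_cast; ring
      _ ≤ K ^ 3 := pow_le_pow_left₀ (by positivity) hYcard 3
  · intro g hg
    have hπg : π g ∈ B ^ 4 := by
      rw [hB, ← Finset.image_pow]
      exact Finset.mem_image_of_mem π hg
    obtain ⟨y, hy, b, hb, hyb⟩ := Finset.mem_mul.mp (h3 hπg)
    obtain ⟨a, ha, rfl⟩ := Finset.mem_image.mp hb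
    have hex : ∃ g₀ : G, π g₀ = y := ⟨g * a⁻¹, by rw [map_mul, map_inv, ← hyb]; group⟩
    have hsy : π (s y) = y := hs y hex
    have hn : (s y)⁻¹ * g * a⁻¹ ∈ N := by
      rw [hN, MonoidHom.mem_ker]
      simp only [map_mul, map_inv, hsy]
      rw [← hyb]; group
    have hnA : (s y)⁻¹ * g * a⁻¹ ∈ A := hNA hn
    have : g = s y * (((s y)⁻¹ * g * a⁻¹) * a) := by group
    rw [this]
    exact Finset.mul_mem_mul (Finset.mem_image_of_mem s hy)
      (by rw [sq]; exact Finset.mul_mem_mul hnA ha)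
end

section
/- Let G be a finite group generated by a symmetric set S containing the identity, and let G₀ be a subgroup of G of index d. Then G₀ ∩ S^{2d−1} contains a symmetric generating set S₀ for G₀ satisfying |S|/d ≤ |S₀| ≤ d·|S| and (diam_S(G) − d)/(2d) ≤ diam_{S₀}(G₀) ≤ diam_S(G). -/
open Pointwise

lemma inv_pow_eq {G : Type*} [Group G] {S : Set G} (hS : S⁻¹ = S) (k : ℕ) :
    (S ^ k)⁻¹ = S ^ k := by rw [← inv_pow, hS]

lemma stab_univ {G : Type*} [Group G] {S : Set G} (h1 : 1 ∈ S) (hS : S⁻¹ = S)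
    (hgen : Subgroup.closure S = ⊤) {k : ℕ} (h : S ^ (k+1) = S ^ k) :
    S ^ (k+1) = Set.univ := by
  have stable : ∀ m, S ^ (k+1+m) = S ^ (k+1) := by
    intro m
    induction m with
    | zero => rfl
    | succ n ih =>
        rw [show k+1+(n+1) = (k+1+n)+1 by omega, pow_succ, ih]
        nth_rewrite 1 [h]
        rw [← pow_succ]
  set H : Subgroup G :=
    { carrier := S ^ (k+1)
      one_mem' := Set.one_mem_pow h1
      mul_mem' := by
        intro a b ha hb
        have : a * b ∈ S ^ (k+1) * S ^ (k+1) := Set.mul_mem_mul ha hb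
        rwa [← pow_add, show (k+1)+(k+1) = k+1+(k+1) from rfl, stable (k+1)] at this
      inv_mem' := by
        intro a ha
        have : a⁻¹ ∈ (S ^ (k+1))⁻¹ := Set.inv_mem_inv.mpr ha
        rwa [inv_pow_eq hS] at this } with hH
  have hSH : S ⊆ (H : Set G) := by
    intro s hs
    have : s ∈ S ^ (k+1) := Set.pow_subset_pow_right h1 (Nat.one_le_iff_ne_zero.mpr (Nat.succ_ne_zero k)) (by simpa using hs)
    exact this
  have : (⊤ : Subgroup G) ≤ H := hgen ▸ Subgroup.closure_le H |>.mpr hSH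
  apply Set.eq_univ_of_univ_subset
  intro g _
  exact this (Subgroup.mem_top g)

lemma exists_pow_univ {G : Type*} [Group G] [Fintype G] {S : Set G} (h1 : 1 ∈ S) (hS : S⁻¹ = S)
    (hgen : Subgroup.closure S = ⊤) : ∃ n, S ^ n = Set.univ := by
  have main : ∀ k : ℕ, S ^ k = Set.univ ∨ k + 1 ≤ (S ^ k).ncard := by
    intro k
    induction k with
    | zero => right; rw [pow_zero, ← Set.singleton_one, Set.ncard_singleton]
    | succ n ih =>
        rcases ih with h | h
        · left
          apply Set.eq_univ_of_univ_subset
          rw [← h]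
          exact Set.pow_subset_pow_right h1 (Nat.le_succ n)
        · by_cases he : S ^ (n+1) = S ^ n
          · left; exact stab_univ h1 hS hgen he
          · right
            have hsub : S ^ n ⊂ S ^ (n+1) :=
              ⟨Set.pow_subset_pow_right h1 (Nat.le_succ n), fun hc => he (subset_antisymm hc (Set.pow_subset_pow_right h1 (Nat.le_succ n)))⟩
            have := Set.ncard_lt_ncard hsub (Set.toFinite _)
            omega
  rcases main (Fintype.card G) with h | h
  · exact ⟨_, h⟩
  · exfalso
    have : (S ^ Fintype.card G).ncard ≤ Fintype.card G := by
      have := Set.ncard_le_ncard (Set.subset_univ (S ^ Fintype.card G)) (Set.toFinite _)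
      simpa [Set.ncard_univ, Nat.card_eq_fintype_card] using this
    omega

lemma coset_cover {G : Type*} [Group G] [Fintype G] {S : Set G} (h1 : 1 ∈ S) (hS : S⁻¹ = S)
    (hgen : Subgroup.closure S = ⊤) (G₀ : Subgroup G) (g : G) :
    ∃ x ∈ S ^ (G₀.index - 1),
      Quotient.mk (QuotientGroup.rightRel G₀) x = Quotient.mk (QuotientGroup.rightRel G₀) g := by
  classical
  set π : G → Quotient (QuotientGroup.rightRel G₀) := Quotient.mk (QuotientGroup.rightRel G₀) with hπ
  set C : ℕ → Set (Quotient (QuotientGroup.rightRel G₀)) := fun k => π '' (S ^ k) with hC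
  have hπsurj : Function.Surjective π := fun q => ⟨q.out, q.out_eq⟩
  have hπmul : ∀ (a b s : G), π a = π b → π (a * s) = π (b * s) := by
    intro a b s h
    rw [hπ, Quotient.eq] at h ⊢
    rw [QuotientGroup.rightRel_apply] at h ⊢
    simpa [mul_assoc] using h
  have hmono : ∀ k, C k ⊆ C (k+1) :=
    fun k => Set.image_mono (Set.pow_subset_pow_right h1 (Nat.le_succ k))
  have hstep : ∀ k, C (k+1) = C k → C (k+2) = C (k+1) := by
    intro k h
    apply subset_antisymm _ (hmono (k+1))
    rintro q ⟨x, hx, rfl⟩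
    rw [pow_succ] at hx
    obtain ⟨y, hy, s, hs, rfl⟩ := hx
    have : π y ∈ C k := h ▸ ⟨y, hy, rfl⟩
    obtain ⟨z, hz, hzy⟩ := this
    exact ⟨z * s, Set.mul_mem_mul hz hs, hπmul z y s hzy⟩
  have hstable : ∀ k, C (k+1) = C k → ∀ m, C (k+1+m) = C (k+1) := by
    intro k h
    have hall : ∀ m, C (k+m+1) = C (k+m) := by
      intro m
      induction m with
      | zero => exact h
      | succ n ih => exact (show C (k+n+2) = C (k+n+1) from hstep (k+n) ih)
    intro m
    induction m with
    | zero => rfl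
    | succ n ih => rw [show k+1+(n+1) = (k+(n+1))+1 by omega, hall (n+1),
        show k+(n+1) = k+1+n by omega, ih]
  obtain ⟨N, hN⟩ := exists_pow_univ h1 hS hgen
  have hCuniv : ∀ m, N ≤ m → C m = Set.univ := by
    intro m hm
    have : S ^ m = Set.univ := by
      apply Set.eq_univ_of_univ_subset
      rw [← hN]
      exact Set.pow_subset_pow_right h1 hm
    rw [hC]
    simp only [this, Set.image_univ]
    exact Set.range_eq_univ.mpr hπsurj
  have main : ∀ k, C k = Set.univ ∨ k + 1 ≤ (C k).ncard := by
    intro k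
    induction k with
    | zero =>
        right
        rw [hC]
        simp only [pow_zero, ← Set.singleton_one, Set.image_singleton, Set.ncard_singleton, le_refl]
    | succ n ih =>
        rcases ih with h | h
        · left
          exact Set.eq_univ_of_univ_subset (h ▸ hmono n)
        · by_cases he : C (n+1) = C n
          · left
            have := hstable n he N
            rw [← this]
            exact hCuniv (n+1+N) (by omega)
          · right
            have hsub : C n ⊂ C (n+1) := ⟨hmono n, fun hc => he (subset_antisymm hc (hmono n))⟩
            have hfin : (C (n+1)).Finite := Set.Finite.image _ (Set.toFinite _)
            have := Set.ncard_lt_ncard hsub hfin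
            omega
  have hcard : Nat.card (Quotient (QuotientGroup.rightRel G₀)) = G₀.index :=
    Nat.card_congr (QuotientGroup.quotientRightRelEquivQuotientLeftRel G₀)
  have hfinal : C (G₀.index - 1) = Set.univ := by
    rcases main (G₀.index - 1) with h | h
    · exact h
    · have hd : 0 < G₀.index := Nat.pos_of_ne_zero Subgroup.index_ne_zero_of_finite
      apply Set.eq_of_subset_of_ncard_le (Set.subset_univ _) _ Set.finite_univ
      rw [Set.ncard_univ, hcard]
      omega
  have : π g ∈ C (G₀.index - 1) := hfinal ▸ Set.mem_univ _
  obtain ⟨x, hx, hxg⟩ := this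
  exact ⟨x, hx, hxg⟩

lemma sdiam_spec {G : Type*} [Group G] {S : Set G} (h : ∃ n, S ^ n = Set.univ) :
    S ^ (sdiam S) = Set.univ :=
  Nat.sInf_mem h

lemma sdiam_le {G : Type*} [Group G] {S : Set G} {n : ℕ} (h : S ^ n = Set.univ) :
    sdiam S ≤ n :=
  Nat.sInf_le h

lemma pi_mul_congr {G : Type*} [Group G] (G₀ : Subgroup G) (a b s : G)
    (h : Quotient.mk (QuotientGroup.rightRel G₀) a = Quotient.mk (QuotientGroup.rightRel G₀) b) :
    Quotient.mk (QuotientGroup.rightRel G₀) (a * s) = Quotient.mk (QuotientGroup.rightRel G₀) (b * s) := by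
  rw [Quotient.eq] at h ⊢
  rw [QuotientGroup.rightRel_apply] at h ⊢
  simpa [mul_assoc] using h

/-- **Reidemeister–Schreier generating sets.**
Let `G` be a finite group generated by a symmetric set `S` containing the identity, and
let `G₀ ≤ G` have index `d`.  Then `G₀ ∩ S^{2d-1}` contains a symmetric generating set
`S₀` for `G₀` with `|S|/d ≤ |S₀| ≤ d|S|` and
`(diam_S(G) − d)/(2d) ≤ diam_{S₀}(G₀) ≤ diam_S(G)`. -/
theorem stmt16 {G : Type*} [Group G] [Fintype G] [DecidableEq G] (S : Finset G)
    (h1 : (1 : G) ∈ S) (hsym : ∀ s ∈ S, s⁻¹ ∈ S)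
    (hgen : Subgroup.closure (S : Set G) = ⊤)
    (G₀ : Subgroup G) (d : ℕ) (hd : G₀.index = d) :
    ∃ S₀ : Finset ↥G₀,
      (1 : ↥G₀) ∈ S₀ ∧ (∀ x ∈ S₀, x⁻¹ ∈ S₀) ∧
      Subgroup.closure (S₀ : Set ↥G₀) = ⊤ ∧
      (∀ x ∈ S₀, (x : G) ∈ S ^ (2 * d - 1)) ∧
      (S.card : ℝ) / (d : ℝ) ≤ (S₀.card : ℝ) ∧
      (S₀.card : ℝ) ≤ (d : ℝ) * (S.card : ℝ) ∧
      ((sdiam (S : Set G) : ℝ) - (d : ℝ)) / (2 * (d : ℝ)) ≤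
        (sdiam (S₀ : Set ↥G₀) : ℝ) ∧
      sdiam (S₀ : Set ↥G₀) ≤ sdiam (S : Set G) := by
  classical
  subst hd
  set d := G₀.index with hdd
  have hd0 : 0 < d := Nat.pos_of_ne_zero Subgroup.index_ne_zero_of_finite
  have h1' : (1 : G) ∈ (S : Set G) := by exact_mod_cast h1
  have hSinv : (S : Set G)⁻¹ = (S : Set G) := by
    ext x
    simp only [Set.mem_inv, Finset.mem_coe]
    exact ⟨fun h => by simpa using hsym _ h, fun h => hsym _ h⟩
  set Q := Quotient (QuotientGroup.rightRel G₀) with hQ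
  set π : G → Q := Quotient.mk (QuotientGroup.rightRel G₀) with hπ
  have hcov : ∀ g : G, ∃ x ∈ (S : Set G) ^ (d - 1), π x = π g :=
    fun g => coset_cover h1' hSinv hgen G₀ g
  set τ : Q → G := fun q => if q = π 1 then 1 else (hcov q.out).choose with hτ
  have hτmem : ∀ q, τ q ∈ (S : Set G) ^ (d - 1) := by
    intro q
    simp only [hτ]
    split
    · exact Set.one_mem_pow h1'
    · exact (hcov q.out).choose_spec.1
  have hτπ : ∀ q, π (τ q) = q := by
    intro q
    simp only [hτ]
    split
    · next h => rw [h]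
    · have := (hcov q.out).choose_spec.2
      rw [this]
      exact q.out_eq
  set r : G → G := fun g => τ (π g) with hr
  have hrπ : ∀ g, π (r g) = π g := fun g => hτπ (π g)
  have hrG₀ : ∀ g, g * (r g)⁻¹ ∈ G₀ := by
    intro g
    have := hrπ g
    rw [hπ, Quotient.eq, QuotientGroup.rightRel_apply] at this
    exact this
  have hrmem : ∀ g, r g ∈ (S : Set G) ^ (d - 1) := fun g => hτmem (π g)
  have hrcong : ∀ a b, π a = π b → r a = r b := by
    intro a b h
    rw [hr]
    simp only [h]
  have hr1' : ∀ h ∈ G₀, r h = 1 := by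
    intro h hh
    have hπh : π h = π 1 := by
      rw [hπ, Quotient.eq, QuotientGroup.rightRel_apply]
      simpa using G₀.inv_mem hh
    rw [hr]
    simp only [hπh]
    exact if_pos rfl
  have hrr : ∀ g, r (r g) = r g := fun g => hrcong _ _ (hrπ g)
  set R : Finset G := Finset.univ.image r with hR
  set S₀G : Finset G := Finset.image (fun p : G × G => p.1 * p.2 * (r (p.1 * p.2))⁻¹) (R ×ˢ S)
    with hS₀G
  have hgenmem : ∀ (x s : G), s ∈ S → r x * s * (r (x * s))⁻¹ ∈ S₀G := by
    intro x s hs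
    rw [hS₀G, Finset.mem_image]
    refine ⟨(r x, s), Finset.mem_product.mpr ⟨?_, hs⟩, ?_⟩
    · rw [hR, Finset.mem_image]; exact ⟨x, Finset.mem_univ x, rfl⟩
    · have hc : r (r x * s) = r (x * s) := hrcong _ _ (pi_mul_congr G₀ (r x) x s (hrπ x))
      dsimp only
      rw [hc]
  have hmemform : ∀ x ∈ S₀G, ∃ y s, s ∈ S ∧ x = r y * s * (r (r y * s))⁻¹ := by
    intro x hx
    rw [hS₀G, Finset.mem_image] at hx
    obtain ⟨p, hp, hpx⟩ := hx
    obtain ⟨hp1, hp2⟩ := Finset.mem_product.mp hp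
    rw [hR, Finset.mem_image] at hp1
    obtain ⟨y, _, hy⟩ := hp1
    exact ⟨y, p.2, hp2, by rw [← hpx, ← hy]⟩
  have hS₀G_G₀ : ∀ x ∈ S₀G, x ∈ G₀ := by
    intro x hx
    obtain ⟨y, s, hs, rfl⟩ := hmemform x hx
    exact hrG₀ (r y * s)
  have hS₀G_pow : ∀ x ∈ S₀G, x ∈ (S : Set G) ^ (2 * d - 1) := by
    intro x hx
    obtain ⟨y, s, hs, rfl⟩ := hmemform x hx
    have h1m : r y ∈ (S : Set G) ^ (d-1) := hrmem y
    have h2m : s ∈ (S : Set G) ^ 1 := by rw [pow_one]; exact_mod_cast hs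
    have h3m : (r (r y * s))⁻¹ ∈ (S : Set G) ^ (d-1) := by
      rw [← inv_pow_eq hSinv]
      exact Set.inv_mem_inv.mpr (hrmem _)
    have hmm : r y * s * (r (r y * s))⁻¹ ∈
        (S : Set G) ^ (d-1) * (S : Set G) ^ 1 * (S : Set G) ^ (d-1) :=
      Set.mul_mem_mul (Set.mul_mem_mul h1m h2m) h3m
    rwa [← pow_add, ← pow_add, show d-1+1+(d-1) = 2*d-1 by omega] at hmm
  have h1S₀G : (1 : G) ∈ S₀G := by
    have hm := hgenmem 1 1 h1
    have hr1 : r 1 = 1 := hr1' 1 (one_mem G₀)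
    simpa [hr1] using hm
  have hsymS₀G : ∀ x ∈ S₀G, x⁻¹ ∈ S₀G := by
    intro x hx
    obtain ⟨y, s, hs, rfl⟩ := hmemform x hx
    set t := r y with ht
    have htr : r t = t := by rw [ht]; exact hrr y
    have hrw : r (r y * s) = r (t * s) := rfl
    rw [hrw]
    have hmem := hgenmem (t * s) s⁻¹ (hsym s hs)
    rw [mul_inv_cancel_right] at hmem
    rw [htr] at hmem
    have he : (t * s * (r (t * s))⁻¹)⁻¹ = r (t * s) * s⁻¹ * t⁻¹ := by group
    rw [he]
    exact hmem
  have hkey : ∀ (n : ℕ) (g : G), g ∈ (S : Set G) ^ n → g * (r g)⁻¹ ∈ (S₀G : Set G) ^ n := by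
    intro n
    induction n with
    | zero =>
        intro g hg
        rw [pow_zero, Set.mem_one] at hg
        subst hg
        rw [pow_zero, hr1' 1 (one_mem G₀), inv_one, mul_one]
        exact Set.one_mem_one
    | succ n ih =>
        intro g hg
        rw [pow_succ] at hg
        obtain ⟨x, hx, s, hs, rfl⟩ := hg
        have h2 : r x * s * (r (x * s))⁻¹ ∈ (S₀G : Set G) :=
          Finset.mem_coe.mpr (hgenmem x s (Finset.mem_coe.mp hs))
        have hmm := Set.mul_mem_mul (ih x hx) h2
        have heq : (x * (r x)⁻¹) * (r x * s * (r (x * s))⁻¹) = (x * s) * (r (x * s))⁻¹ := by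
          group
        rw [heq] at hmm
        rwa [pow_succ]
  set S₀ : Finset ↥G₀ := S₀G.preimage (Subtype.val) (Subtype.val_injective.injOn) with hS₀
  have hmemS₀ : ∀ x : ↥G₀, x ∈ S₀ ↔ (x : G) ∈ S₀G := by
    intro x
    rw [hS₀, Finset.mem_preimage]
  have hval_img : Subtype.val '' (S₀ : Set ↥G₀) = (S₀G : Set G) := by
    ext y
    simp only [Set.mem_image, Finset.mem_coe]
    constructor
    · rintro ⟨x, hx, rfl⟩
      exact (hmemS₀ x).mp hx
    · intro hy
      exact ⟨⟨y, hS₀G_G₀ y hy⟩, (hmemS₀ _).mpr hy, rfl⟩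
  have hcards : S₀.card = S₀G.card := by
    have himg : S₀.image (Subtype.val) = S₀G := by
      ext y
      simp only [Finset.mem_image]
      constructor
      · rintro ⟨x, hx, rfl⟩
        exact (hmemS₀ x).mp hx
      · intro hy
        exact ⟨⟨y, hS₀G_G₀ y hy⟩, (hmemS₀ _).mpr hy, rfl⟩
    rw [← himg, Finset.card_image_of_injective _ Subtype.val_injective]
  have hpowimg : ∀ N : ℕ, Subtype.val '' ((S₀ : Set ↥G₀) ^ N) = (S₀G : Set G) ^ N := by
    intro N
    have h' : (⇑G₀.subtype) = (Subtype.val : ↥G₀ → G) := rfl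
    rw [← hval_img, ← h', Set.image_pow]
  have hpowuniv : ∀ N : ℕ, (S : Set G) ^ N = Set.univ → (S₀ : Set ↥G₀) ^ N = Set.univ := by
    intro N hNu
    apply Set.eq_univ_of_univ_subset
    intro x _
    obtain ⟨g, hg⟩ := x
    have hgS : g ∈ (S : Set G) ^ N := hNu ▸ Set.mem_univ g
    have hk := hkey N g hgS
    rw [hr1' g hg, inv_one, mul_one] at hk
    have hk2 : g ∈ Subtype.val '' ((S₀ : Set ↥G₀) ^ N) := (hpowimg N).symm ▸ hk
    obtain ⟨x', hxmem, hxval⟩ := hk2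
    have hxx : x' = ⟨g, hg⟩ := Subtype.ext hxval
    rwa [← hxx]
  obtain ⟨N, hN⟩ := exists_pow_univ h1' hSinv hgen
  have hclosure : Subgroup.closure (S₀ : Set ↥G₀) = ⊤ := by
    rw [eq_top_iff]
    intro x _
    have hx : x ∈ (S₀ : Set ↥G₀) ^ N := by rw [hpowuniv N hN]; exact Set.mem_univ x
    have hsub : ∀ n : ℕ,
        (S₀ : Set ↥G₀) ^ n ⊆ (Subgroup.closure (S₀ : Set ↥G₀) : Set ↥G₀) := by
      intro n
      induction n with
      | zero =>
          rw [pow_zero]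
          intro y hy
          rw [Set.mem_one] at hy
          subst hy
          exact (Subgroup.closure _).one_mem
      | succ n ih =>
          rw [pow_succ]
          rintro y ⟨a, ha, b, hb, rfl⟩
          exact (Subgroup.closure _).mul_mem (ih ha) (Subgroup.subset_closure hb)
    exact hsub N hx
  have hDSmem : (S : Set G) ^ (sdiam (S : Set G)) = Set.univ := sdiam_spec ⟨N, hN⟩
  have hdiamle : sdiam (S₀ : Set ↥G₀) ≤ sdiam (S : Set G) :=
    sdiam_le (hpowuniv _ hDSmem)
  have hD₀mem : (S₀ : Set ↥G₀) ^ (sdiam (S₀ : Set ↥G₀)) = Set.univ :=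
    sdiam_spec ⟨_, hpowuniv _ hDSmem⟩
  have hDle : sdiam (S : Set G) ≤ 2 * d * (sdiam (S₀ : Set ↥G₀)) + d := by
    set D₀ := sdiam (S₀ : Set ↥G₀) with hD₀def
    have hG₀pow : (G₀ : Set G) ⊆ (S : Set G) ^ ((2*d-1)*D₀) := by
      intro h hh
      have hm : (⟨h, hh⟩ : ↥G₀) ∈ (S₀ : Set ↥G₀) ^ D₀ := by
        rw [hD₀mem]; exact Set.mem_univ _
      have h2 : h ∈ (S₀G : Set G) ^ D₀ := by
        rw [← hpowimg D₀]; exact ⟨_, hm, rfl⟩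
      have h3 : (S₀G : Set G) ⊆ (S : Set G) ^ (2*d-1) :=
        fun x hx => hS₀G_pow x (Finset.mem_coe.mp hx)
      have h4 := Set.pow_subset_pow_left h3 (n := D₀) h2
      rwa [← pow_mul] at h4
    have huniv : (S : Set G) ^ ((2*d-1)*D₀ + (d-1)) = Set.univ := by
      apply Set.eq_univ_of_univ_subset
      intro g _
      rw [pow_add]
      have hm := Set.mul_mem_mul (hG₀pow (hrG₀ g)) (hrmem g)
      rwa [inv_mul_cancel_right] at hm
    have h5 : sdiam (S : Set G) ≤ (2*d-1)*D₀ + (d-1) := sdiam_le huniv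
    have h6 : (2*d-1)*D₀ ≤ 2*d*D₀ := Nat.mul_le_mul_right _ (by omega)
    omega
  letI : Fintype Q := Fintype.ofFinite Q
  have hRcard : R.card ≤ d := by
    have hsubR : R ⊆ Finset.univ.image τ := by
      intro x hx
      rw [hR, Finset.mem_image] at hx
      obtain ⟨g, _, hg⟩ := hx
      exact Finset.mem_image.mpr ⟨π g, Finset.mem_univ _, hg⟩
    calc R.card ≤ (Finset.univ.image τ).card := Finset.card_le_card hsubR
      _ ≤ (Finset.univ : Finset Q).card := Finset.card_image_le
      _ = Fintype.card Q := rfl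
      _ = d := by
          rw [← Nat.card_eq_fintype_card]
          exact Nat.card_congr (QuotientGroup.quotientRightRelEquivQuotientLeftRel G₀)
  have hcard_upper : S₀.card ≤ d * S.card := by
    calc S₀.card = S₀G.card := hcards
      _ ≤ (R ×ˢ S).card := Finset.card_image_le
      _ = R.card * S.card := Finset.card_product _ _
      _ ≤ d * S.card := Nat.mul_le_mul_right _ hRcard
  have hcard_lower : S.card ≤ S₀.card * d := by
    have hmaps : ∀ a ∈ S, (a * (r a)⁻¹, r a) ∈ S₀G ×ˢ R := by
      intro a ha
      rw [Finset.mem_product]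
      constructor
      · have hm := hgenmem 1 a ha
        rwa [hr1' 1 (one_mem G₀), one_mul] at hm
      · rw [hR, Finset.mem_image]
        exact ⟨a, Finset.mem_univ a, rfl⟩
    have hinj : Set.InjOn (fun a => (a * (r a)⁻¹, r a)) (S : Set G) := by
      intro a _ b _ hab
      simp only [Prod.mk.injEq] at hab
      have h1 := hab.1
      rw [hab.2] at h1
      exact mul_right_cancel h1
    calc S.card ≤ (S₀G ×ˢ R).card := Finset.card_le_card_of_injOn _ hmaps hinj
      _ = S₀G.card * R.card := Finset.card_product _ _
      _ ≤ S₀.card * d := by rw [hcards]; exact Nat.mul_le_mul_left _ hRcard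
  refine ⟨S₀, ?_, ?_, hclosure, ?_, ?_, ?_, ?_, hdiamle⟩
  · rw [hmemS₀]; exact h1S₀G
  · intro x hx
    rw [hmemS₀] at hx ⊢
    exact hsymS₀G _ hx
  · intro x hx
    rw [hmemS₀] at hx
    rw [← Finset.mem_coe, Finset.coe_pow]
    exact hS₀G_pow _ hx
  · rw [div_le_iff₀ (by exact_mod_cast hd0)]
    exact_mod_cast hcard_lower
  · exact_mod_cast hcard_upper
  · rw [div_le_iff₀ (by positivity)]
    have : (sdiam (S : Set G) : ℝ) ≤ 2 * d * (sdiam (S₀ : Set ↥G₀)) + d := by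
      exact_mod_cast hDle
    push_cast at this ⊢
    linarith
end

section
/- For all integers r ≥ 1 and s ≥ 1 there exists a constant c = c(r,s) > 0 such that every finite nilpotent group G of nilpotency class at most s that is generated by at most r elements satisfies |G/[G,G]| ≥ |G|^c, where [G,G] denotes the commutator subgroup of G. -/
open Subgroup
open scoped commutatorElement

private lemma lcs_succ' {G : Type*} [Group G] (n : ℕ) :
    (⊤ : Subgroup G).lowerCentralSeries (n + 1) = ⁅(⊤ : Subgroup G).lowerCentralSeries n, ⊤⁆ := rfl

private lemma lcs_map_eq {G H : Type*} [Group G] [Group H] (f : G →* H)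
    (hf : Function.Surjective f) (n : ℕ) :
    ((⊤ : Subgroup G).lowerCentralSeries n).map f = (⊤ : Subgroup H).lowerCentralSeries n := by
  induction n with
  | zero =>
      rw [Subgroup.lowerCentralSeries_zero, Subgroup.lowerCentralSeries_zero]
      exact Subgroup.map_top_of_surjective f hf
  | succ n ih =>
      rw [lcs_succ', lcs_succ', Subgroup.map_commutator, ih,
        Subgroup.map_top_of_surjective f hf]

private lemma comm_mul_left {Q : Type*} [Group Q] (y z t : Q)
    (h : ⁅z, t⁆ ∈ Subgroup.center Q) : ⁅y * z, t⁆ = ⁅z, t⁆ * ⁅y, t⁆ := by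
  have h2 : y * ⁅z, t⁆ = ⁅z, t⁆ * y := Subgroup.mem_center_iff.mp h y
  calc ⁅y * z, t⁆ = y * ⁅z, t⁆ * y⁻¹ * ⁅y, t⁆ := by group
    _ = ⁅z, t⁆ * ⁅y, t⁆ := by rw [h2]; group

private lemma comm_mul_right {Q : Type*} [Group Q] (y g h : Q)
    (hc : ⁅y, h⁆ ∈ Subgroup.center Q) : ⁅y, g * h⁆ = ⁅y, g⁆ * ⁅y, h⁆ := by
  have h2 : g * ⁅y, h⁆ = ⁅y, h⁆ * g := Subgroup.mem_center_iff.mp hc g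
  calc ⁅y, g * h⁆ = ⁅y, g⁆ * (g * ⁅y, h⁆ * g⁻¹) := by group
    _ = ⁅y, g⁆ * ⁅y, h⁆ := by rw [h2]; group

private lemma comm_pow_left {Q : Type*} [Group Q] (x t : Q)
    (h : ∀ n : ℕ, ⁅x ^ n, t⁆ ∈ Subgroup.center Q) (n : ℕ) :
    ⁅x, t⁆ ^ n = ⁅x ^ n, t⁆ := by
  induction n with
  | zero => simp
  | succ n ih =>
      have h1 : ⁅x ^ (n + 1), t⁆ = ⁅x ^ n, t⁆ * ⁅x, t⁆ := by
        rw [pow_succ']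
        simpa using comm_mul_left x (x ^ n) t (h n)
      rw [pow_succ, ih, h1]

private lemma comm_center_eq_one {Q : Type*} [Group Q] {c : Q} (hc : c ∈ Subgroup.center Q)
    (g : Q) : ⁅c, g⁆ = 1 :=
  commutatorElement_eq_one_iff_mul_comm.mpr (Subgroup.mem_center_iff.mp hc g).symm

private lemma gen_chain {G : Type*} [Group G] [Fintype G] (T : Finset G)
    (hT : Subgroup.closure (T : Set G) = ⊤) (k : ℕ) :
    ∃ S : Finset G, S.card ≤ T.card ^ (k + 1) ∧
      (S : Set G) ⊆ ((⊤ : Subgroup G).lowerCentralSeries k : Set G) ∧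
      (∀ x ∈ S, x ^ Nat.card (G ⧸ commutator G) ∈ (⊤ : Subgroup G).lowerCentralSeries (k + 1)) ∧
      (⊤ : Subgroup G).lowerCentralSeries k ≤ Subgroup.closure (S : Set G) ⊔ (⊤ : Subgroup G).lowerCentralSeries (k + 1) := by
  classical
  induction k with
  | zero =>
      refine ⟨T, by simp, by simp, fun x _ => ?_, ?_⟩
      · exact (commutator G).pow_index_mem x
      · rw [hT]; exact le_sup_left
  | succ k ih =>
      obtain ⟨S, hcard, hsub, hpow, hgen⟩ := ih
      set a := Nat.card (G ⧸ commutator G) with ha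
      set Q := G ⧸ (⊤ : Subgroup G).lowerCentralSeries (k + 2) with hQdef
      set π : G →* Q := QuotientGroup.mk' _ with hπ
      have hker : π.ker = (⊤ : Subgroup G).lowerCentralSeries (k + 2) := QuotientGroup.ker_mk' _
      have hsurj : Function.Surjective π := QuotientGroup.mk'_surjective _
      have hmap : ∀ n, ((⊤ : Subgroup G).lowerCentralSeries n).map π = (⊤ : Subgroup Q).lowerCentralSeries n :=
        lcs_map_eq π hsurj
      have hQbot : (⊤ : Subgroup Q).lowerCentralSeries (k + 2) = ⊥ := by
        rw [← hmap]
        exact (Subgroup.map_eq_bot_iff _).mpr hker.ge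
      have hmemQ : ∀ {n : ℕ} {x : G}, x ∈ (⊤ : Subgroup G).lowerCentralSeries n →
          π x ∈ (⊤ : Subgroup Q).lowerCentralSeries n := by
        intro n x hx
        rw [← hmap n]
        exact Subgroup.mem_map_of_mem π hx
      have hcent : (⊤ : Subgroup Q).lowerCentralSeries (k + 1) ≤ Subgroup.center Q := by
        intro u hu
        rw [Subgroup.mem_center_iff]
        intro g
        have h1 : ⁅u, g⁆ ∈ (⊤ : Subgroup Q).lowerCentralSeries (k + 2) :=
          commutator_mem_commutator hu (mem_top g)
        rw [hQbot, Subgroup.mem_bot] at h1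
        exact (commutatorElement_eq_one_iff_mul_comm.mp h1).symm
      set S' : Finset G := (S ×ˢ T).image fun p => ⁅p.1, p.2⁆ with hS'
      have hS'mem : ∀ x ∈ S, ∀ t ∈ T, ⁅x, t⁆ ∈ S' := by
        intro x hx t ht
        rw [hS', Finset.mem_image]
        exact ⟨(x, t), Finset.mem_product.mpr ⟨hx, ht⟩, rfl⟩
      have hS'sub : (S' : Set G) ⊆ ((⊤ : Subgroup G).lowerCentralSeries (k + 1) : Set G) := by
        intro u hu
        simp only [hS', Finset.coe_image, Set.mem_image, Finset.mem_coe,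
          Finset.mem_product] at hu
        obtain ⟨⟨x, t⟩, ⟨hx, ht⟩, rfl⟩ := hu
        rw [SetLike.mem_coe, lcs_succ']
        exact commutator_mem_commutator (hsub (Finset.mem_coe.mpr hx)) (mem_top _)
      refine ⟨S', ?_, hS'sub, ?_, ?_⟩
      · calc S'.card ≤ (S ×ˢ T).card := Finset.card_image_le
          _ = S.card * T.card := Finset.card_product _ _
          _ ≤ T.card ^ (k + 1) * T.card := Nat.mul_le_mul_right _ hcard
          _ = T.card ^ (k + 2) := (pow_succ _ _).symm
      · intro u hu
        simp only [hS', Finset.mem_image, Finset.mem_product] at hu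
        obtain ⟨⟨x, t⟩, ⟨hx, ht⟩, rfl⟩ := hu
        have hxk : x ∈ (⊤ : Subgroup G).lowerCentralSeries k := hsub (Finset.mem_coe.mpr hx)
        have hxa : x ^ a ∈ (⊤ : Subgroup G).lowerCentralSeries (k + 1) := hpow x hx
        rw [← hker, MonoidHom.mem_ker, map_pow, map_commutatorElement]
        have hcp : ∀ n : ℕ, ⁅(π x) ^ n, π t⁆ ∈ Subgroup.center Q := by
          intro n
          exact hcent (commutator_mem_commutator (pow_mem (hmemQ hxk) n) (mem_top _))
        rw [comm_pow_left _ _ hcp a, ← map_pow]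
        exact comm_center_eq_one (hcent (hmemQ hxa)) _
      · set C : Subgroup Q := Subgroup.closure (π '' (S' : Set G)) with hC
        have hCc : C ≤ Subgroup.center Q := by
          rw [hC, Subgroup.closure_le]
          rintro _ ⟨v, hv, rfl⟩
          exact hcent (hmemQ (hS'sub hv))
        have hA : ∀ y ∈ (⊤ : Subgroup Q).lowerCentralSeries k, ∀ t ∈ T, ⁅y, π t⁆ ∈ C := by
          intro y hy t ht
          set Kt : Subgroup Q :=
            { carrier := {z | ⁅z, π t⁆ ∈ C}
              one_mem' := by simp [one_mem]
              mul_mem' := by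
                intro u v hu hv
                simp only [Set.mem_setOf_eq] at hu hv ⊢
                rw [comm_mul_left u v (π t) (hCc hv)]
                exact mul_mem hv hu
              inv_mem' := by
                intro u hu
                simp only [Set.mem_setOf_eq] at hu ⊢
                have h1 : ⁅u⁻¹ * u, π t⁆ = ⁅u, π t⁆ * ⁅u⁻¹, π t⁆ :=
                  comm_mul_left u⁻¹ u (π t) (hCc hu)
                simp only [inv_mul_cancel, commutatorElement_one_left] at h1
                rw [← inv_eq_of_mul_eq_one_right h1.symm]
                exact inv_mem hu } with hKt
          have hk1 : (⊤ : Subgroup Q).lowerCentralSeries k ≤ Kt := by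
            rw [← hmap k]
            refine le_trans (Subgroup.map_mono hgen) ?_
            rw [Subgroup.map_sup, MonoidHom.map_closure]
            refine sup_le ?_ ?_
            · rw [Subgroup.closure_le]
              rintro _ ⟨x, hx, rfl⟩
              show ⁅π x, π t⁆ ∈ C
              rw [← map_commutatorElement]
              exact Subgroup.subset_closure
                ⟨⁅x, t⁆, Finset.mem_coe.mpr (hS'mem x (Finset.mem_coe.mp hx) t ht), rfl⟩
            · rintro _ ⟨x, hx, rfl⟩
              show ⁅π x, π t⁆ ∈ C
              rw [comm_center_eq_one (hcent (hmemQ hx)) (π t)]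
              exact one_mem C
          exact hk1 hy
        have hB : ∀ y ∈ (⊤ : Subgroup Q).lowerCentralSeries k, ∀ g : Q, ⁅y, g⁆ ∈ C := by
          intro y hy g
          set Hy : Subgroup Q :=
            { carrier := {g | ⁅y, g⁆ ∈ C}
              one_mem' := by simp [one_mem]
              mul_mem' := by
                intro u v hu hv
                simp only [Set.mem_setOf_eq] at hu hv ⊢
                rw [comm_mul_right y u v (hCc hv)]
                exact mul_mem hu hv
              inv_mem' := by
                intro u hu
                simp only [Set.mem_setOf_eq] at hu ⊢
                have h1 : ⁅y, u⁻¹ * u⁆ = ⁅y, u⁻¹⁆ * ⁅y, u⁆ :=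
                  comm_mul_right y u⁻¹ u (hCc hu)
                simp only [inv_mul_cancel, commutatorElement_one_right] at h1
                rw [eq_inv_of_mul_eq_one_left h1.symm]
                exact inv_mem hu } with hHy
          have htop : (⊤ : Subgroup Q) ≤ Hy := by
            rw [← Subgroup.map_top_of_surjective π hsurj, ← congrArg (Subgroup.map π) hT, MonoidHom.map_closure,
              Subgroup.closure_le]
            rintro _ ⟨t, ht, rfl⟩
            exact hA y hy t (Finset.mem_coe.mp ht)
          exact htop (mem_top g)
        have hQgen : (⊤ : Subgroup Q).lowerCentralSeries (k + 1) ≤ C := by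
          rw [lcs_succ' k]
          exact Subgroup.commutator_le.mpr fun y hy g _ => hB y hy g
        intro x hx
        have h1 : π x ∈ Subgroup.map π (Subgroup.closure (S' : Set G)) := by
          rw [MonoidHom.map_closure]
          exact hQgen (hmemQ hx)
        obtain ⟨y, hy, hyx⟩ := h1
        have h2 : y⁻¹ * x ∈ (⊤ : Subgroup G).lowerCentralSeries (k + 2) := by
          rw [← hker, MonoidHom.mem_ker, map_mul, map_inv, hyx, inv_mul_cancel]
        have h3 : x = y * (y⁻¹ * x) := by group
        rw [h3]
        exact mul_mem
          ((le_sup_left : Subgroup.closure (S' : Set G) ≤ _) hy)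
          ((le_sup_right : (⊤ : Subgroup G).lowerCentralSeries (k + 2) ≤ _) h2)

private lemma comm_card_le {V : Type*} [CommGroup V] [Finite V] (U : Finset V)
    (hU : Subgroup.closure (U : Set V) = ⊤) {a : ℕ} (ha : 0 < a)
    (hord : ∀ x ∈ U, x ^ a = 1) : Nat.card V ≤ a ^ U.card := by
  classical
  rcases eq_or_lt_of_le (show 1 ≤ a from ha) with h1 | h1
  · -- a = 1
    have hU1 : ∀ x ∈ U, x = 1 := fun x hx => by simpa [← h1] using hord x hx
    have hbot : (⊤ : Subgroup V) ≤ ⊥ := by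
      rw [← hU, Subgroup.closure_le]
      intro x hx
      simp [hU1 x (Finset.mem_coe.mp hx)]
    haveI : Subsingleton V := ⟨fun x y => by
      have hx : x ∈ (⊥ : Subgroup V) := hbot (mem_top x)
      have hy : y ∈ (⊥ : Subgroup V) := hbot (mem_top y)
      rw [Subgroup.mem_bot] at hx hy
      rw [hx, hy]⟩
    calc Nat.card V ≤ 1 := le_of_eq Nat.card_unique
      _ ≤ a ^ U.card := Nat.one_le_pow _ _ ha
  · haveI : NeZero a := ⟨ha.ne'⟩
    have hmod : ∀ x : V, x ^ a = 1 → ∀ n : ℕ, x ^ (n % a) = x ^ n := by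
      intro x hx n
      conv_rhs => rw [← Nat.div_add_mod n a]
      rw [pow_add, pow_mul, hx, one_pow, one_mul]
    set f : ({x // x ∈ U} → ZMod a) → V := fun g => ∏ x : {x // x ∈ U}, (x : V) ^ (g x).val
      with hf
    have hfmul : ∀ g h, f (g + h) = f g * f h := by
      intro g h
      rw [hf]
      simp only [Pi.add_apply]
      rw [← Finset.prod_mul_distrib]
      refine Finset.prod_congr rfl fun x _ => ?_
      rw [ZMod.val_add, hmod _ (hord x.1 x.2) _, pow_add]
    have hfone : f 0 = 1 := by
      rw [hf]
      simp
    set R : Subgroup V :=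
      { carrier := Set.range f
        one_mem' := ⟨0, hfone⟩
        mul_mem' := by
          rintro _ _ ⟨g, rfl⟩ ⟨h, rfl⟩
          exact ⟨g + h, hfmul g h⟩
        inv_mem' := by
          rintro _ ⟨g, rfl⟩
          refine ⟨-g, ?_⟩
          have : f (-g) * f g = 1 := by rw [← hfmul, neg_add_cancel, hfone]
          rw [eq_inv_of_mul_eq_one_left this]
      } with hR
    haveI : Fact (1 < a) := ⟨h1⟩
    have hsurj : Function.Surjective f := by
      intro v
      have hle : (⊤ : Subgroup V) ≤ R := by
        rw [← hU, Subgroup.closure_le]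
        intro u hu
        refine ⟨fun x => if x = ⟨u, Finset.mem_coe.mp hu⟩ then 1 else 0, ?_⟩
        have heq : f (fun x => if x = ⟨u, Finset.mem_coe.mp hu⟩ then 1 else 0)
            = ∏ x : {x // x ∈ U},
              (x : V) ^ ((if x = ⟨u, Finset.mem_coe.mp hu⟩ then (1 : ZMod a) else 0)).val := rfl
        rw [heq, Fintype.prod_eq_single (⟨u, Finset.mem_coe.mp hu⟩ : {x // x ∈ U})
          (fun x hx => by simp [if_neg hx])]
        simp [ZMod.val_one]
      exact hle (mem_top v)
    calc Nat.card V ≤ Nat.card ({x // x ∈ U} → ZMod a) := Nat.card_le_card_of_surjective f hsurj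
      _ = a ^ U.card := by
          rw [Nat.card_fun, Nat.card_zmod, Nat.card_eq_finsetCard]

private lemma card_lcs_le {G : Type*} [Group G] [Fintype G] {r s : ℕ} (hr : 1 ≤ r)
    (T : Finset G) (hTr : T.card ≤ r) (hT : Subgroup.closure (T : Set G) = ⊤)
    (m : ℕ) (hG : (⊤ : Subgroup G).lowerCentralSeries s = ⊥) :
    Nat.card ((⊤ : Subgroup G).lowerCentralSeries (s - m)) ≤
      Nat.card (G ⧸ commutator G) ^ (m * r ^ s) := by
  classical
  set a := Nat.card (G ⧸ commutator G) with ha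
  have ha1 : 1 ≤ a := Nat.one_le_iff_ne_zero.mpr Nat.card_pos.ne'
  induction m with
  | zero =>
      simp only [Nat.sub_zero, hG, Nat.zero_mul, pow_zero]
      exact le_of_eq Subgroup.card_bot
  | succ m ih =>
      by_cases hms : s ≤ m
      · have hss : s - (m + 1) = s - m := by omega
        rw [hss]
        exact le_trans ih (Nat.pow_le_pow_right ha1 (Nat.mul_le_mul_right _ (Nat.le_succ m)))
      · push_neg at hms
        set k := s - (m + 1) with hk
        have hk1 : s - m = k + 1 := by omega
        obtain ⟨S, hcard, hsub, hpow, hgen⟩ := gen_chain T hT k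
        set H := (⊤ : Subgroup G).lowerCentralSeries k with hH
        have hle : (⊤ : Subgroup G).lowerCentralSeries (k + 1) ≤ H :=
          (⊤ : Subgroup G).lowerCentralSeries_antitone (Nat.le_succ k)
        set N := ((⊤ : Subgroup G).lowerCentralSeries (k + 1)).subgroupOf H with hN
        have hcomm : ∀ x y : ↥H ⧸ N, x * y = y * x := by
          intro x y
          obtain ⟨u, rfl⟩ := QuotientGroup.mk_surjective x
          obtain ⟨v, rfl⟩ := QuotientGroup.mk_surjective y
          rw [← QuotientGroup.mk_mul, ← QuotientGroup.mk_mul, QuotientGroup.eq]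
          have hc : ((u * v)⁻¹ * (v * u) : ↥H) = ⁅v⁻¹, u⁻¹⁆ := by group
          rw [hc, Subgroup.mem_subgroupOf]
          have hcoe : ((⁅v⁻¹, u⁻¹⁆ : ↥H) : G) = ⁅(v : G)⁻¹, (u : G)⁻¹⁆ := by
            simp [commutatorElement_def]
          rw [hcoe]
          exact commutator_mem_commutator (inv_mem v.2) (mem_top _)
        letI : CommGroup (↥H ⧸ N) := { (inferInstance : Group (↥H ⧸ N)) with mul_comm := hcomm }
        set U : Finset (↥H ⧸ N) := S.image
          (fun x => if hx : x ∈ H then (QuotientGroup.mk (⟨x, hx⟩ : ↥H) : ↥H ⧸ N) else 1)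
          with hU
        have hUcard : U.card ≤ S.card := Finset.card_image_le
        have hUord : ∀ v ∈ U, v ^ a = 1 := by
          intro v hv
          rw [hU, Finset.mem_image] at hv
          obtain ⟨x, hxS, rfl⟩ := hv
          have hxH : x ∈ H := hsub (Finset.mem_coe.mpr hxS)
          rw [dif_pos hxH, ← QuotientGroup.mk_pow, QuotientGroup.eq_one_iff,
            Subgroup.mem_subgroupOf]
          have hcoe : (((⟨x, hxH⟩ : ↥H) ^ a : ↥H) : G) = x ^ a := by
            simp only [SubmonoidClass.coe_pow]
          rw [hcoe]
          exact hpow x hxS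
        have hUgen : Subgroup.closure (U : Set (↥H ⧸ N)) = ⊤ := by
          rw [eq_top_iff]
          intro v _
          obtain ⟨y, rfl⟩ := QuotientGroup.mk_surjective v
          set W : Subgroup ↥H := (Subgroup.closure (U : Set (↥H ⧸ N))).comap
            (QuotientGroup.mk' N) with hW
          have hWmap : Subgroup.closure (S : Set G) ⊔ (⊤ : Subgroup G).lowerCentralSeries (k + 1) ≤
              Subgroup.map H.subtype W := by
            refine sup_le ?_ ?_
            · rw [Subgroup.closure_le]
              intro x hx
              have hxH : x ∈ H := hsub hx
              refine ⟨⟨x, hxH⟩, ?_, rfl⟩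
              show QuotientGroup.mk' N ⟨x, hxH⟩ ∈ Subgroup.closure (U : Set (↥H ⧸ N))
              apply Subgroup.subset_closure
              refine Finset.mem_coe.mpr (Finset.mem_image.mpr ⟨x, Finset.mem_coe.mp hx, ?_⟩)
              rw [dif_pos hxH]
              rfl
            · intro n hn
              refine ⟨⟨n, hle hn⟩, ?_, rfl⟩
              show QuotientGroup.mk' N ⟨n, hle hn⟩ ∈ Subgroup.closure (U : Set (↥H ⧸ N))
              have h1 : QuotientGroup.mk' N ⟨n, hle hn⟩ = 1 :=
                (QuotientGroup.eq_one_iff _).mpr (Subgroup.mem_subgroupOf.mpr hn)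
              rw [h1]
              exact one_mem _
          have hyH : (y : G) ∈ Subgroup.map H.subtype W := hWmap (hgen y.2)
          obtain ⟨w, hw, hwy⟩ := hyH
          have hwyeq : w = y := Subtype.ext hwy
          exact hwyeq ▸ hw
        have hVcard : Nat.card (↥H ⧸ N) ≤ a ^ (r ^ (k + 1)) := by
          refine le_trans (comm_card_le U hUgen Nat.card_pos hUord) ?_
          exact Nat.pow_le_pow_right ha1
            (le_trans hUcard (le_trans hcard (Nat.pow_le_pow_left hTr (k + 1))))
        have hcardeq : Nat.card ↥H = Nat.card (↥H ⧸ N) * Nat.card ↥N :=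
          Subgroup.card_eq_card_quotient_mul_card_subgroup N
        have hNcard : Nat.card ↥N = Nat.card ↥((⊤ : Subgroup G).lowerCentralSeries (k + 1)) :=
          Nat.card_congr (Subgroup.subgroupOfEquivOfLe hle).toEquiv
        rw [hk1] at ih
        calc Nat.card ↥((⊤ : Subgroup G).lowerCentralSeries (s - (m + 1)))
            = Nat.card (↥H ⧸ N) * Nat.card ↥N := hcardeq
          _ ≤ a ^ (r ^ (k + 1)) * a ^ (m * r ^ s) :=
              Nat.mul_le_mul hVcard (le_trans (le_of_eq hNcard) ih)
          _ = a ^ (r ^ (k + 1) + m * r ^ s) := (pow_add a _ _).symm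
          _ ≤ a ^ ((m + 1) * r ^ s) := by
              refine Nat.pow_le_pow_right ha1 ?_
              have hrs : r ^ (k + 1) ≤ r ^ s := Nat.pow_le_pow_right hr (by omega)
              rw [Nat.succ_mul]
              omega

/-- **Nilpotent groups of bounded rank have large abelianisations.**
For all `r, s ≥ 1` there is `c = c(r,s) > 0` such that every finite nilpotent group `G` of
class at most `s` generated by at most `r` elements satisfies `|G/[G,G]| ≥ |G|^c`. -/
theorem stmt18 (r s : ℕ) (hr : 1 ≤ r) (hs : 1 ≤ s) :
    ∃ c : ℝ, 0 < c ∧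
      ∀ (G : Type*) [Group G] [Fintype G],
        (⊤ : Subgroup G).lowerCentralSeries s = ⊥ →
        (∃ T : Finset G, T.card ≤ r ∧ Subgroup.closure (T : Set G) = ⊤) →
        (Nat.card G : ℝ) ^ c ≤ (Nat.card (G ⧸ commutator G) : ℝ) := by
  have hK : 0 < s * r ^ s := Nat.mul_pos hs (Nat.pow_pos hr)
  refine ⟨((s * r ^ s : ℕ) : ℝ)⁻¹, by positivity, ?_⟩
  intro G _ _ hlcs hgen
  obtain ⟨T, hTr, hT⟩ := hgen
  set a := Nat.card (G ⧸ commutator G) with ha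
  have ha1 : 1 ≤ a := Nat.one_le_iff_ne_zero.mpr Nat.card_pos.ne'
  have key : Nat.card G ≤ a ^ (s * r ^ s) := by
    have h := card_lcs_le hr T hTr hT s hlcs
    rwa [Nat.sub_self, Subgroup.lowerCentralSeries_zero, Subgroup.card_top] at h
  have hKR : (0 : ℝ) < ((s * r ^ s : ℕ) : ℝ) := by exact_mod_cast hK
  calc (Nat.card G : ℝ) ^ (((s * r ^ s : ℕ) : ℝ)⁻¹)
      ≤ ((a ^ (s * r ^ s) : ℕ) : ℝ) ^ (((s * r ^ s : ℕ) : ℝ)⁻¹) := by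
        refine Real.rpow_le_rpow (by positivity) (by exact_mod_cast key) (by positivity)
    _ = ((a : ℝ) ^ (((s * r ^ s : ℕ)) : ℝ)) ^ (((s * r ^ s : ℕ) : ℝ)⁻¹) := by
        rw [Real.rpow_natCast]
        push_cast
        ring_nf
    _ = (a : ℝ) ^ ((((s * r ^ s : ℕ)) : ℝ) * (((s * r ^ s : ℕ) : ℝ)⁻¹)) :=
        (Real.rpow_mul (Nat.cast_nonneg a) _ _).symm
    _ = (a : ℝ) := by
        rw [mul_inv_cancel₀ hKR.ne', Real.rpow_one]
end
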